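/- arXiv:0906.5167 — 3 statements merged into one kernel-verified Lean document; each statement's English description precedes it below -/
import Mathlib

section
/- The number of permutations in S(N) with no decreasing subsequence of length 3 equals the Catalan number (2N)!/(N!(N+1)!). -/
open Finset

def rect (d q : ℕ) : YoungDiagram where
  cells := Finset.range d ×ˢ Finset.range q
  isLowerSet := by
    rintro ⟨a, b⟩ ⟨c, e⟩ ⟨h1, h2⟩ h
    simp only [Finset.coe_product, Set.mem_prod, Finset.mem_coe, Finset.mem_range] at *
    omega

def complY (d q : ℕ) (μ : YoungDiagram) : YoungDiagram where
  cells := (Finset.range d ×ˢ Finset.range q).filter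
    (fun c => c.2 < q - μ.rowLen (d - 1 - c.1))
  isLowerSet := by
    rintro ⟨a, b⟩ ⟨c, e⟩ ⟨h1, h2⟩ h
    simp only [Finset.coe_filter, Set.mem_setOf_eq, Finset.mem_product, Finset.mem_range] at *
    have := μ.rowLen_anti (d - 1 - a) (d - 1 - c) (by omega)
    omega

noncomputable def dimSYT (μ : YoungDiagram) : ℕ :=
  Nat.card {f : μ.cells → Fin μ.card //
    Function.Bijective f ∧
    ∀ a b : μ.cells, (a : ℕ × ℕ).1 ≤ (b : ℕ × ℕ).1 → (a : ℕ × ℕ).2 ≤ (b : ℕ × ℕ).2 →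
      a ≠ b → f a < f b}

def HasDecreasingSubseq {N : ℕ} (σ : Equiv.Perm (Fin N)) (k : ℕ) : Prop :=
  ∃ s : Fin k → Fin N, StrictMono s ∧ ∀ i j : Fin k, i < j → σ (s j) < σ (s i)

def HasIncreasingSubseq {N : ℕ} (σ : Equiv.Perm (Fin N)) (k : ℕ) : Prop :=
  ∃ s : Fin k → Fin N, StrictMono s ∧ ∀ i j : Fin k, i < j → σ (s i) < σ (s j)

noncomputable def S (d N : ℕ) : ℕ :=
  Nat.card {σ : Equiv.Perm (Fin N) // ¬ HasDecreasingSubseq σ (d + 1)}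

noncomputable def W (d : ℕ) (y : Fin d → ℝ) : ℝ :=
  (1/2) * ∑ i, y i ^ 2 -
    ∑ p ∈ Finset.univ.filter (fun p : Fin d × Fin d => p.1 < p.2), Real.log (y p.1 - y p.2)

noncomputable def dimR (d : ℕ) (l : Fin d → ℝ) : ℝ :=
  (Real.Gamma (∑ i, l i + 1) / ∏ i, Real.Gamma (l i - (i : ℕ) + d)) *
    ∏ p ∈ Finset.univ.filter (fun p : Fin d × Fin d => p.1 < p.2),
      (l p.1 - l p.2 + (p.2 : ℕ) - (p.1 : ℕ))

noncomputable def mehta (d : ℕ) (β : ℝ) : ℝ :=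
  ∫ x : Fin d → ℝ, Real.exp (-(β/2) * ∑ i, x i ^ 2) *
    ∏ p ∈ Finset.univ.filter (fun p : Fin d × Fin d => p.1 < p.2), |x p.1 - x p.2| ^ β


/-- superdiagonal monotone sequences -/
def SupT (n : ℕ) := {f : Fin n → Fin n // Monotone f ∧ ∀ i : Fin n, (i : ℕ) ≤ (f i : ℕ)}

instance (n : ℕ) : Finite (SupT n) :=
  inferInstanceAs (Finite {f : Fin n → Fin n // _})

noncomputable def A (n : ℕ) : ℕ := Nat.card (SupT n)

lemma A_zero : A 0 = 1 := by
  rw [A, Nat.card_eq_one_iff_unique]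
  constructor
  · constructor; rintro ⟨f, _⟩ ⟨g, _⟩
    apply Subtype.ext; funext i; exact absurd i.2 (by omega)
  · exact ⟨⟨fun i => i, monotone_id, fun i => le_rfl⟩⟩

/-- lift a Fin-valued map to ℕ -/
def natf {n : ℕ} (f : Fin n → Fin n) : ℕ → ℕ := fun i => if h : i < n then (f ⟨i, h⟩ : ℕ) else 0

lemma natf_lt {n : ℕ} (f : Fin n → Fin n) {i : ℕ} (h : i < n) : natf f i < n := by
  rw [natf, dif_pos h]; exact (f ⟨i, h⟩).2

lemma natf_apply {n : ℕ} (f : Fin n → Fin n) (i : Fin n) : natf f i = (f i : ℕ) := by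
  rw [natf, dif_pos i.2]

lemma natf_mono {n : ℕ} {f : Fin n → Fin n} (hf : Monotone f) {i j : ℕ}
    (hij : i ≤ j) (hj : j < n) : natf f i ≤ natf f j := by
  rw [natf, natf, dif_pos hj, dif_pos (lt_of_le_of_lt hij hj)]
  exact hf (show (⟨i, _⟩ : Fin n) ≤ ⟨j, hj⟩ from hij)

lemma natf_sup {n : ℕ} {f : Fin n → Fin n} (hf : ∀ i : Fin n, (i : ℕ) ≤ (f i : ℕ)) {i : ℕ}
    (h : i < n) : i ≤ natf f i := by
  rw [natf, dif_pos h]; exact hf ⟨i, h⟩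

def glue (k : ℕ) (G H : ℕ → ℕ) : ℕ → ℕ := fun i =>
  if i < k then G i + 1 else if i = k then k else H (i - k - 1) + k + 1

lemma glue_lt {k i : ℕ} (G H : ℕ → ℕ) (h : i < k) : glue k G H i = G i + 1 := by
  rw [glue, if_pos h]

lemma glue_self {k : ℕ} (G H : ℕ → ℕ) : glue k G H k = k := by
  rw [glue, if_neg (lt_irrefl k), if_pos rfl]

lemma glue_gt {k i : ℕ} (G H : ℕ → ℕ) (h : k < i) : glue k G H i = H (i - k - 1) + k + 1 := by
  rw [glue, if_neg (by omega), if_neg (by omega)]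

/-- the inverse of the first-return decomposition -/
def bwd (n : ℕ) : ((k : Fin (n + 1)) × (SupT k × SupT (n - k))) → SupT (n + 1) :=
  fun ⟨k, ⟨g, hg1, hg2⟩, ⟨h, hh1, hh2⟩⟩ =>
    have hkn : (k : ℕ) < n + 1 := k.2
    have hFb : ∀ i : ℕ, i < n + 1 → glue k (natf g) (natf h) i < n + 1 := by
      intro i hi
      rcases lt_trichotomy i (k : ℕ) with h1 | h1 | h1
      · rw [glue_lt _ _ h1]; have := natf_lt g h1; omega
      · rw [h1, glue_self]; omega
      · rw [glue_gt _ _ h1]; have := natf_lt h (show i - k - 1 < n - k by omega); omega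
    have hFm : ∀ i j : ℕ, i ≤ j → j < n + 1 →
        glue k (natf g) (natf h) i ≤ glue k (natf g) (natf h) j := by
      intro i j hij hj
      rcases lt_trichotomy i (k : ℕ) with h1 | h1 | h1 <;>
        rcases lt_trichotomy j (k : ℕ) with h2 | h2 | h2 <;> try omega
      · rw [glue_lt _ _ h1, glue_lt _ _ h2]
        have := natf_mono hg1 hij h2; omega
      · rw [glue_lt _ _ h1, h2, glue_self]
        have := natf_lt g h1; omega
      · rw [glue_lt _ _ h1, glue_gt _ _ h2]
        have := natf_lt g h1; omega
      · rw [h1, h2]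
      · rw [h1, glue_self, glue_gt _ _ h2]; omega
      · rw [glue_gt _ _ h1, glue_gt _ _ h2]
        have := natf_mono hh1 (show i - k - 1 ≤ j - k - 1 by omega)
          (show j - k - 1 < n - k by omega)
        omega
    have hFs : ∀ i : ℕ, i < n + 1 → i ≤ glue k (natf g) (natf h) i := by
      intro i hi
      rcases lt_trichotomy i (k : ℕ) with h1 | h1 | h1
      · rw [glue_lt _ _ h1]; have := natf_sup hg2 h1; omega
      · rw [h1, glue_self]
      · rw [glue_gt _ _ h1]
        have := natf_sup hh2 (show i - k - 1 < n - k by omega); omega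
    ⟨fun i => ⟨glue k (natf g) (natf h) i, hFb i i.2⟩,
      fun a b hab => by
        simp only [Fin.mk_le_mk]
        exact hFm a b hab b.2,
      fun i => hFs i i.2⟩

lemma bwd_val (n : ℕ) (x : (k : Fin (n + 1)) × (SupT k × SupT (n - k))) (i : ℕ)
    (hi : i < n + 1) :
    ((bwd n x).1 ⟨i, hi⟩ : ℕ) = glue x.1 (natf x.2.1.1) (natf x.2.2.1) i := by
  obtain ⟨k, ⟨g, hg1, hg2⟩, ⟨h, hh1, hh2⟩⟩ := x
  rfl

lemma bwd_natf (n : ℕ) (x : (k : Fin (n + 1)) × (SupT k × SupT (n - k))) (i : ℕ)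
    (hi : i < n + 1) :
    natf (bwd n x).1 i = glue x.1 (natf x.2.1.1) (natf x.2.2.1) i := by
  rw [natf, dif_pos hi, bwd_val]

lemma bwd_val' (n : ℕ) (x : (k : Fin (n + 1)) × (SupT k × SupT (n - k))) (i : Fin (n + 1)) :
    ((bwd n x).1 i : ℕ) = glue x.1 (natf x.2.1.1) (natf x.2.2.1) (i : ℕ) := by
  obtain ⟨k, ⟨g, hg1, hg2⟩, ⟨h, hh1, hh2⟩⟩ := x
  rfl

lemma glue_natf_eq {n : ℕ} {f : Fin (n + 1) → Fin (n + 1)} (hmono : Monotone f)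
    (hsup : ∀ i : Fin (n + 1), (i : ℕ) ≤ (f i : ℕ)) {K : ℕ} (hk1 : K ≤ n)
    (hk2 : natf f K = K) (hmin : ∀ j : ℕ, j < K → j < natf f j) {G H : ℕ → ℕ}
    (hG : ∀ j : ℕ, j < K → G j = natf f j - 1)
    (hH : ∀ j : ℕ, j < n - K → H j = natf f (K + 1 + j) - (K + 1)) (i : ℕ) (hi : i < n + 1) :
    glue K G H i = natf f i := by
  rcases lt_trichotomy i K with h1 | h1 | h1
  · rw [glue_lt _ _ h1, hG i h1]
    have := hmin i h1
    omega
  · rw [h1, glue_self, hk2]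
  · rw [glue_gt _ _ h1, hH (i - K - 1) (by omega)]
    have harg : K + 1 + (i - K - 1) = i := by omega
    rw [harg]
    have := natf_sup hsup hi
    omega

lemma bwd_bijective (n : ℕ) : Function.Bijective (bwd n) := by
  constructor
  · rintro ⟨k, ⟨g, hg1, hg2⟩, ⟨h, hh1, hh2⟩⟩ ⟨k', ⟨g', hg1', hg2'⟩, ⟨h', hh1', hh2'⟩⟩ heq
    have hval : ∀ i : ℕ, i < n + 1 →
        glue k (natf g) (natf h) i = glue k' (natf g') (natf h') i := by
      intro i hi
      have := congrArg (fun z => (z.1 ⟨i, hi⟩ : ℕ)) heq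
      simpa [bwd_val] using this
    -- k = k'
    have hkk : (k : ℕ) = (k' : ℕ) := by
      by_contra hne
      rcases Nat.lt_or_ge (k : ℕ) (k' : ℕ) with hlt | hge
      · have h1 := hval k (by omega)
        rw [glue_self, glue_lt _ _ hlt] at h1
        have := natf_sup hg2' hlt
        omega
      · have hlt : (k' : ℕ) < (k : ℕ) := by omega
        have h1 := hval k' (by omega)
        rw [glue_self, glue_lt _ _ hlt] at h1
        have := natf_sup hg2 hlt
        omega
    have hk : k = k' := Fin.ext hkk
    subst hk
    -- g = g'
    have hg : g = g' := by
      funext j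
      apply Fin.ext
      have h1 := hval j (lt_of_lt_of_le j.2 (by omega))
      rw [glue_lt _ _ j.2, glue_lt _ _ j.2, natf_apply, natf_apply] at h1
      omega
    have hh : h = h' := by
      funext j
      apply Fin.ext
      have hj : (j : ℕ) < n - (k : ℕ) := j.2
      have hkn : (k : ℕ) < n + 1 := k.2
      have h1 := hval ((k : ℕ) + 1 + j) (by omega)
      rw [glue_gt _ _ (by omega), glue_gt _ _ (by omega)] at h1
      have harg : (k : ℕ) + 1 + (j : ℕ) - k - 1 = (j : ℕ) := by omega
      rw [harg, natf_apply, natf_apply] at h1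
      omega
    subst hg; subst hh
    rfl
  · rintro ⟨f, hmono, hsup⟩
    have hex : ∃ i : ℕ, i ≤ n ∧ natf f i = i :=
      ⟨n, le_rfl, le_antisymm (by have := natf_lt f (show n < n+1 by omega); omega)
        (natf_sup hsup (by omega))⟩
    have hk1 : Nat.find hex ≤ n := (Nat.find_spec hex).1
    have hk2 : natf f (Nat.find hex) = Nat.find hex := (Nat.find_spec hex).2
    have hmin : ∀ j : ℕ, j < Nat.find hex → j < natf f j := by
      intro j hj
      have h1 := Nat.find_min hex hj
      have h2 := natf_sup hsup (show j < n + 1 by omega)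
      omega
    refine ⟨⟨⟨Nat.find hex, by omega⟩,
      ⟨fun i => ⟨natf f i - 1, ?_⟩, ?_, ?_⟩,
      ⟨fun i => ⟨natf f (Nat.find hex + 1 + i) - (Nat.find hex + 1), ?_⟩, ?_, ?_⟩⟩, ?_⟩
    · -- bound of g
      have hi : (i : ℕ) < Nat.find hex := i.2
      have h2 := hmin i hi
      have h3 := natf_mono hmono (le_of_lt hi) (show Nat.find hex < n + 1 by omega)
      show natf f ↑i - 1 < Nat.find hex
      omega
    · -- g monotone
      intro a b hab
      have hb : (b : ℕ) < Nat.find hex := b.2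
      have h1 := natf_mono hmono (show (a:ℕ) ≤ (b:ℕ) from hab) (show (b:ℕ) < n + 1 by omega)
      simp only [Fin.mk_le_mk]
      omega
    · -- g superdiag
      intro i
      have hi : (i : ℕ) < Nat.find hex := i.2
      have h2 := hmin i hi
      simp only
      omega
    · -- bound of h
      have hi : (i : ℕ) < n - Nat.find hex := i.2
      have := natf_lt f (show Nat.find hex + 1 + (i:ℕ) < n + 1 by omega)
      show natf f (Nat.find hex + 1 + ↑i) - (Nat.find hex + 1) < n - Nat.find hex
      omega
    · -- h monotone
      intro a b hab
      have hb : (b : ℕ) < n - Nat.find hex := b.2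
      have h1 := natf_mono hmono (show Nat.find hex + 1 + (a:ℕ) ≤ Nat.find hex + 1 + (b:ℕ) by
        have : (a:ℕ) ≤ (b:ℕ) := hab; omega) (show Nat.find hex + 1 + (b:ℕ) < n + 1 by omega)
      simp only [Fin.mk_le_mk]
      omega
    · -- h superdiag
      intro i
      have hi : (i : ℕ) < n - Nat.find hex := i.2
      have h1 := natf_sup hsup (show Nat.find hex + 1 + (i:ℕ) < n + 1 by omega)
      simp only
      omega
    · -- bwd of this equals f
      apply Subtype.ext
      funext i
      apply Fin.ext
      refine Eq.trans (bwd_val' n _ i) ?_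
      refine Eq.trans (glue_natf_eq hmono hsup hk1 hk2 hmin ?_ ?_ (i : ℕ) i.2)
        (natf_apply f i)
      · intro j hj
        rw [natf, dif_pos hj]
      · intro j hj
        rw [natf, dif_pos hj]

noncomputable instance (n : ℕ) : Fintype (SupT n) := Fintype.ofFinite _

lemma A_succ (n : ℕ) : A (n + 1) = ∑ k : Fin (n + 1), A k * A (n - k) := by
  rw [A, ← Nat.card_eq_of_bijective _ (bwd_bijective n), Nat.card_eq_fintype_card,
    Fintype.card_sigma]
  refine Finset.sum_congr rfl fun k _ => ?_
  rw [Fintype.card_prod, A, A, Nat.card_eq_fintype_card, Nat.card_eq_fintype_card]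

theorem A_eq_catalan (n : ℕ) : A n = catalan n := by
  induction n using Nat.strong_induction_on with
  | _ n ih =>
    match n with
    | 0 => simp [A_zero]
    | Nat.succ m =>
      rw [A_succ, catalan_succ]
      refine Finset.sum_congr rfl fun i _ => ?_
      rw [ih i (by omega), ih (m - i) (by omega)]

/-! ### Part B: 321-avoiding permutations ↔ superdiagonal monotone sequences -/

section PartB

variable {n : ℕ}

/-- counting: the `r`-th element of `s` is at most `x` if there are at least `r+1`
elements of `s` that are `≤ x`. -/
lemma nth_le_of_count {s : Finset (Fin n)} {m : ℕ} (h : s.card = m) (r : Fin m) (x : Fin n)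
    (hc : (r : ℕ) + 1 ≤ (s.filter (· ≤ x)).card) : s.orderEmbOfFin h r ≤ x := by
  by_contra hx
  push_neg at hx
  have hsub : s.filter (· ≤ x) ⊆ (Finset.Iio r).image (s.orderEmbOfFin h) := by
    intro y hy
    rw [Finset.mem_filter] at hy
    obtain ⟨a, ha⟩ : ∃ a, s.orderEmbOfFin h a = y := by
      have : y ∈ Set.range (s.orderEmbOfFin h) := by
        rw [Finset.range_orderEmbOfFin]; exact hy.1
      exact this
    refine Finset.mem_image.2 ⟨a, ?_, ha⟩
    rw [Finset.mem_Iio]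
    have : s.orderEmbOfFin h a < s.orderEmbOfFin h r := lt_of_le_of_lt (ha ▸ hy.2) hx
    exact (OrderEmbedding.lt_iff_lt _).1 this
  have := Finset.card_le_card hsub
  have h2 := Finset.card_image_le (s := Finset.Iio r) (f := s.orderEmbOfFin h)
  rw [Fin.card_Iio] at h2
  omega

/-- counting: there are exactly `r+1` elements of `s` that are `≤` the `r`-th element. -/
lemma count_le_nth {s : Finset (Fin n)} {m : ℕ} (h : s.card = m) (r : Fin m) :
    (s.filter (· ≤ s.orderEmbOfFin h r)).card = (r : ℕ) + 1 := by
  have hset : s.filter (· ≤ s.orderEmbOfFin h r) = (Finset.Iic r).image (s.orderEmbOfFin h) := by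
    ext y
    rw [Finset.mem_filter, Finset.mem_image]
    constructor
    · rintro ⟨hy1, hy2⟩
      obtain ⟨a, ha⟩ : ∃ a, s.orderEmbOfFin h a = y := by
        have : y ∈ Set.range (s.orderEmbOfFin h) := by
          rw [Finset.range_orderEmbOfFin]; exact hy1
        exact this
      exact ⟨a, Finset.mem_Iic.2 ((OrderEmbedding.le_iff_le _).1 (ha ▸ hy2)), ha⟩
    · rintro ⟨a, ha1, rfl⟩
      exact ⟨Finset.orderEmbOfFin_mem s h a,
        (OrderEmbedding.le_iff_le _).2 (Finset.mem_Iic.1 ha1)⟩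
  rw [hset, Finset.card_image_of_injective _ (s.orderEmbOfFin h).injective, Fin.card_Iic]

/-- splitting `Iic x` by membership in `s`. -/
lemma count_split (s : Finset (Fin n)) (x : Fin n) :
    (s.filter (· ≤ x)).card + (sᶜ.filter (· ≤ x)).card = (x : ℕ) + 1 := by
  classical
  have h1 : s.filter (· ≤ x) = (Finset.Iic x).filter (· ∈ s) := by
    ext y; simp [Finset.mem_filter, Finset.mem_Iic, and_comm]
  have h2 : sᶜ.filter (· ≤ x) = (Finset.Iic x).filter (· ∉ s) := by
    ext y; simp [Finset.mem_filter, Finset.mem_Iic, and_comm]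
  rw [h1, h2, Finset.card_filter_add_card_filter_not, Fin.card_Iic]

/-- the set of positions where a monotone map jumps (strict records). -/
def jumps (f : Fin n → Fin n) : Finset (Fin n) :=
  Finset.univ.filter (fun i => ∀ j, j < i → f j < f i)

lemma mem_jumps {f : Fin n → Fin n} {i : Fin n} :
    i ∈ jumps f ↔ ∀ j, j < i → f j < f i := by
  simp [jumps]

lemma injOn_jumps (f : Fin n → Fin n) : Set.InjOn f (jumps f) := by
  intro a ha b hb hab
  rcases lt_trichotomy a b with h | h | h
  · exact absurd hab (ne_of_lt (mem_jumps.1 hb a h))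
  · exact h
  · exact absurd hab.symm (ne_of_lt (mem_jumps.1 ha b h))

lemma card_vcompl (f : Fin n → Fin n) :
    (((jumps f).image f)ᶜ).card = ((jumps f)ᶜ).card := by
  rw [Finset.card_compl, Finset.card_compl,
    Finset.card_image_of_injOn (injOn_jumps f)]

/-- the permutation associated to a monotone superdiagonal map: jump positions take the
jump values, other positions take the remaining values in increasing order. -/
def psiFun (f : Fin n → Fin n) : Fin n → Fin n := fun i =>
  if h : i ∈ jumps f then f i
  else (((jumps f).image f)ᶜ).orderEmbOfFin (card_vcompl f)
    ((((jumps f)ᶜ).orderIsoOfFin rfl).symm ⟨i, Finset.mem_compl.2 h⟩)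

lemma psiFun_jump {f : Fin n → Fin n} {i : Fin n} (h : i ∈ jumps f) : psiFun f i = f i :=
  dif_pos h

lemma psiFun_mem_compl {f : Fin n → Fin n} {i : Fin n} (h : i ∉ jumps f) :
    psiFun f i ∈ ((jumps f).image f)ᶜ := by
  rw [psiFun, dif_neg h]
  exact Finset.orderEmbOfFin_mem _ _ _

lemma psiFun_strictMonoOn {f : Fin n → Fin n} {i j : Fin n} (hi : i ∉ jumps f)
    (hj : j ∉ jumps f) (hij : i < j) : psiFun f i < psiFun f j := by
  simp only [psiFun, dif_neg hi, dif_neg hj]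
  apply (Finset.orderEmbOfFin _ _).strictMono
  have : (⟨i, Finset.mem_compl.2 hi⟩ : ((jumps f)ᶜ : Finset (Fin n))) <
      ⟨j, Finset.mem_compl.2 hj⟩ := hij
  exact (OrderIso.lt_iff_lt _).2 this

lemma psiFun_le {f : Fin n → Fin n} (hf1 : Monotone f)
    (hf2 : ∀ i : Fin n, (i : ℕ) ≤ (f i : ℕ)) (i : Fin n) : psiFun f i ≤ f i := by
  by_cases h : i ∈ jumps f
  · rw [psiFun_jump h]
  · set r := (((jumps f)ᶜ.orderIsoOfFin rfl).symm ⟨i, Finset.mem_compl.2 h⟩) with hr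
    have hre : (jumps f)ᶜ.orderEmbOfFin rfl r = i := by
      rw [← Finset.coe_orderIsoOfFin_apply, hr, OrderIso.apply_symm_apply]
    have hcount : ((jumps f)ᶜ.filter (· ≤ i)).card = (r : ℕ) + 1 := by
      rw [← hre]; exact count_le_nth rfl r
    have hVfilter : ((jumps f).image f).filter (· ≤ f i)
        = ((jumps f).filter (· ≤ i)).image f := by
      ext y
      simp only [Finset.mem_filter, Finset.mem_image]
      constructor
      · rintro ⟨⟨j, hj1, hj2⟩, hy2⟩
        subst hj2
        refine ⟨j, ⟨hj1, ?_⟩, rfl⟩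
        by_contra hlt
        push_neg at hlt
        exact absurd hy2 (not_le.2 (mem_jumps.1 hj1 i hlt))
      · rintro ⟨j, hj, rfl⟩
        exact ⟨⟨j, hj.1, rfl⟩, hf1 hj.2⟩
    have hVcard : (((jumps f).image f).filter (· ≤ f i)).card
        = ((jumps f).filter (· ≤ i)).card := by
      rw [hVfilter]
      exact Finset.card_image_of_injOn
        ((injOn_jumps f).mono (by intro x hx; exact (Finset.mem_filter.1 hx).1))
    have hs1 := count_split (jumps f) i
    have hs2 := count_split ((jumps f).image f) (f i)
    have hsup := hf2 i
    have hge : (r : ℕ) + 1 ≤ ((((jumps f).image f)ᶜ).filter (· ≤ f i)).card := by omega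
    have hfin := nth_le_of_count (card_vcompl f) r (f i) hge
    calc psiFun f i = (((jumps f).image f)ᶜ).orderEmbOfFin (card_vcompl f) r := by
          rw [psiFun, dif_neg h]
        _ ≤ f i := hfin

lemma psiFun_injective (f : Fin n → Fin n) : Function.Injective (psiFun f) := by
  intro a b hab
  by_cases ha : a ∈ jumps f <;> by_cases hb : b ∈ jumps f
  · rw [psiFun_jump ha, psiFun_jump hb] at hab
    exact injOn_jumps f ha hb hab
  · exfalso
    have h1 := psiFun_mem_compl hb
    rw [← hab, psiFun_jump ha] at h1
    exact (Finset.mem_compl.1 h1) (Finset.mem_image_of_mem f ha)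
  · exfalso
    have h1 := psiFun_mem_compl ha
    rw [hab, psiFun_jump hb] at h1
    exact (Finset.mem_compl.1 h1) (Finset.mem_image_of_mem f hb)
  · rcases lt_trichotomy a b with h | h | h
    · exact absurd hab (ne_of_lt (psiFun_strictMonoOn ha hb h))
    · exact h
    · exact absurd hab.symm (ne_of_lt (psiFun_strictMonoOn hb ha h))

/-- running maximum of a map on `Fin n`. -/
def runmax (σ : Fin n → Fin n) (i : Fin n) : Fin n :=
  (Finset.Iic i).sup' ⟨i, Finset.mem_Iic.2 le_rfl⟩ σ

lemma le_runmax (σ : Fin n → Fin n) {j i : Fin n} (h : j ≤ i) : σ j ≤ runmax σ i :=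
  Finset.le_sup' σ (Finset.mem_Iic.2 h)

lemma runmax_le (σ : Fin n → Fin n) {i x : Fin n} (h : ∀ j, j ≤ i → σ j ≤ x) :
    runmax σ i ≤ x :=
  Finset.sup'_le _ σ fun j hj => h j (Finset.mem_Iic.1 hj)

lemma runmax_exists (σ : Fin n → Fin n) (i : Fin n) : ∃ j, j ≤ i ∧ runmax σ i = σ j := by
  obtain ⟨j, hj, h⟩ := Finset.exists_mem_eq_sup' ⟨i, Finset.mem_Iic.2 le_rfl⟩ σ
  exact ⟨j, Finset.mem_Iic.1 hj, h⟩

lemma runmax_mono (σ : Fin n → Fin n) : Monotone (runmax σ) := by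
  intro i j hij
  exact runmax_le σ fun a ha => le_runmax σ (le_trans ha hij)

lemma runmax_superdiag {σ : Fin n → Fin n} (hσ : Function.Injective σ) (i : Fin n) :
    (i : ℕ) ≤ (runmax σ i : ℕ) := by
  have h1 : (Finset.Iic i).image σ ⊆ Finset.Iic (runmax σ i) := by
    intro y hy
    obtain ⟨a, ha, rfl⟩ := Finset.mem_image.1 hy
    exact Finset.mem_Iic.2 (le_runmax σ (Finset.mem_Iic.1 ha))
  have h2 := Finset.card_le_card h1
  rw [Finset.card_image_of_injective _ hσ, Fin.card_Iic, Fin.card_Iic] at h2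
  omega

/-- the constructed permutation realizes `f` as its running maximum. -/
lemma runmax_psiFun {f : Fin n → Fin n} (hf1 : Monotone f)
    (hf2 : ∀ i : Fin n, (i : ℕ) ≤ (f i : ℕ)) : runmax (psiFun f) = f := by
  funext i
  apply le_antisymm
  · exact runmax_le _ fun j hj => le_trans (psiFun_le hf1 hf2 j) (hf1 hj)
  · -- take the largest jump ≤ i
    have h0n : 0 < n := i.pos
    have h0J : (⟨0, h0n⟩ : Fin n) ∈ jumps f := by
      rw [mem_jumps]
      intro j hj
      exact absurd hj (by simp [Fin.lt_def])
    have hne : ((jumps f).filter (· ≤ i)).Nonempty :=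
      ⟨⟨0, h0n⟩, Finset.mem_filter.2 ⟨h0J, by simp [Fin.le_def]⟩⟩
    set j0 := ((jumps f).filter (· ≤ i)).max' hne with hj0
    have hj0mem := ((jumps f).filter (· ≤ i)).max'_mem hne
    rw [Finset.mem_filter] at hj0mem
    obtain ⟨hj0J, hj0le⟩ := hj0mem
    -- f is constant on [j0, i]
    have key : ∀ t : ℕ, ∀ a : Fin n, (a : ℕ) = (j0 : ℕ) + t → a ≤ i → f a = f j0 := by
      intro t
      induction t with
      | zero =>
        intro a ha _
        have : a = j0 := Fin.ext (by omega)
        rw [this]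
      | succ t ih =>
        intro a ha hai
        have haj0 : j0 < a := by rw [Fin.lt_def]; omega
        have hanJ : a ∉ jumps f := by
          intro hmem
          have : a ≤ j0 := by
            rw [hj0]
            exact Finset.le_max' ((jumps f).filter (· ≤ i)) a
              (Finset.mem_filter.2 ⟨hmem, hai⟩)
          rw [Fin.le_def] at this
          omega
        rw [mem_jumps] at hanJ
        push_neg at hanJ
        obtain ⟨b, hb1, hb2⟩ := hanJ
        have hapos : 0 < (a : ℕ) := by omega
        have ha'lt : (a : ℕ) - 1 < n := by omega
        set a' : Fin n := ⟨(a : ℕ) - 1, ha'lt⟩ with ha'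
        have hva' : (a' : ℕ) = (a : ℕ) - 1 := rfl
        have hba' : b ≤ a' := by
          rw [Fin.le_def]
          rw [Fin.lt_def] at hb1
          omega
        have h1 : f a ≤ f a' := le_trans hb2 (hf1 hba')
        have h2 : f a' ≤ f a := hf1 (by rw [Fin.le_def]; omega)
        have hfa : f a = f a' := le_antisymm h1 h2
        rw [hfa]
        exact ih a' (by omega) (le_trans (le_of_lt (by rw [Fin.lt_def]; omega)) hai)
    have hj0i : (j0 : ℕ) ≤ (i : ℕ) := hj0le
    have hfi : f i = f j0 := key ((i : ℕ) - (j0 : ℕ)) i (by omega) le_rfl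
    rw [hfi, ← psiFun_jump hj0J]
    exact le_runmax _ hj0le

/-- no decreasing subsequence of length 3, elementary form. -/
def NoDesc3 (σ : Fin n → Fin n) : Prop :=
  ∀ a b c : Fin n, a < b → b < c → σ b < σ a → σ c < σ b → False

lemma psiFun_noDesc3 {f : Fin n → Fin n} (hf1 : Monotone f)
    (hf2 : ∀ i : Fin n, (i : ℕ) ≤ (f i : ℕ)) : NoDesc3 (psiFun f) := by
  intro a b c hab hbc h1 h2
  by_cases hb : b ∈ jumps f
  · have : psiFun f a ≤ psiFun f b :=
      le_trans (psiFun_le hf1 hf2 a) (by rw [psiFun_jump hb]; exact hf1 (le_of_lt hab))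
    exact absurd h1 (not_lt.2 this)
  by_cases hc : c ∈ jumps f
  · have : psiFun f b ≤ psiFun f c :=
      le_trans (psiFun_le hf1 hf2 b) (by rw [psiFun_jump hc]; exact hf1 (le_of_lt hbc))
    exact absurd h2 (not_lt.2 this)
  · exact absurd h2 (not_lt.2 (le_of_lt (psiFun_strictMonoOn hb hc hbc)))

section Uniqueness

variable {σ : Fin n → Fin n} (hinj : Function.Injective σ) (hav : NoDesc3 σ)

include hinj

lemma sigma_le_runmax (i : Fin n) : σ i ≤ runmax σ i := le_runmax σ le_rfl

lemma jump_runmax_eq {i : Fin n} (h : ∀ j, j < i → runmax σ j < runmax σ i) :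
    σ i = runmax σ i := by
  obtain ⟨j, hj, hfi⟩ := runmax_exists σ i
  rcases lt_or_eq_of_le hj with hlt | rfl
  · exfalso
    have h1 : σ j ≤ runmax σ j := le_runmax σ le_rfl
    have h2 := h j hlt
    rw [hfi] at h2
    exact absurd (lt_of_le_of_lt h1 h2) (lt_irrefl _)
  · exact hfi.symm

lemma mem_jumps_runmax_iff (i : Fin n) :
    i ∈ jumps (runmax σ) ↔ ∀ j, j < i → σ j < σ i := by
  rw [mem_jumps]
  constructor
  · intro h j hji
    have h1 : σ j ≤ runmax σ j := le_runmax σ le_rfl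
    have h2 := h j hji
    rw [← jump_runmax_eq hinj h] at h2
    exact lt_of_le_of_lt h1 h2
  · intro hLR j hji
    obtain ⟨a, ha, hfa⟩ := runmax_exists σ j
    rw [hfa]
    exact lt_of_lt_of_le (hLR a (lt_of_le_of_lt ha hji)) (le_runmax σ le_rfl)

include hav

lemma strictMonoOn_nonjumps {i j : Fin n} (hi : i ∉ jumps (runmax σ))
    (hij : i < j) (hjJ : j ∉ jumps (runmax σ)) : σ i < σ j := by
  rw [mem_jumps_runmax_iff hinj] at hi
  push_neg at hi
  obtain ⟨a, ha1, ha2⟩ := hi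
  have hne : σ a ≠ σ i := fun h => absurd (hinj h) (ne_of_lt ha1)
  have ha3 : σ i < σ a := lt_of_le_of_ne ha2 (Ne.symm hne)
  rcases lt_trichotomy (σ i) (σ j) with h | h | h
  · exact h
  · exact absurd (hinj h) (ne_of_lt hij)
  · exact absurd (hav a i j ha1 hij ha3 h) (fun x => x)

lemma psiFun_runmax_eq : psiFun (runmax σ) = σ := by
  funext i
  by_cases hi : i ∈ jumps (runmax σ)
  · rw [psiFun_jump hi]
    exact (jump_runmax_eq hinj (mem_jumps.1 hi)).symm
  · -- both sides are the increasing enumeration of the complement values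
    have hGmem : ∀ r : Fin ((jumps (runmax σ))ᶜ.card),
        σ ((jumps (runmax σ))ᶜ.orderEmbOfFin rfl r) ∈ ((jumps (runmax σ)).image (runmax σ))ᶜ := by
      intro r
      have hrc := Finset.orderEmbOfFin_mem ((jumps (runmax σ))ᶜ) rfl r
      rw [Finset.mem_compl] at hrc ⊢
      intro hmem
      obtain ⟨j, hj1, hj2⟩ := Finset.mem_image.1 hmem
      have : σ j = runmax σ j := jump_runmax_eq hinj (mem_jumps.1 hj1)
      rw [← this] at hj2
      exact hrc (hinj hj2 ▸ hj1)
    have hGmono : StrictMono (fun r : Fin ((jumps (runmax σ))ᶜ.card) =>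
        σ ((jumps (runmax σ))ᶜ.orderEmbOfFin rfl r)) := by
      intro r s hrs
      have h1 := ((jumps (runmax σ))ᶜ.orderEmbOfFin rfl).strictMono hrs
      have h2 := Finset.orderEmbOfFin_mem ((jumps (runmax σ))ᶜ) rfl r
      have h3 := Finset.orderEmbOfFin_mem ((jumps (runmax σ))ᶜ) rfl s
      rw [Finset.mem_compl] at h2 h3
      exact strictMonoOn_nonjumps hinj hav h2 h1 h3
    have hG := Finset.orderEmbOfFin_unique (card_vcompl (runmax σ)) hGmem hGmono
    rw [psiFun, dif_neg hi]
    rw [← congrFun hG (((jumps (runmax σ))ᶜ.orderIsoOfFin rfl).symm ⟨i, Finset.mem_compl.2 hi⟩)]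
    congr 1
    rw [← Finset.coe_orderIsoOfFin_apply, OrderIso.apply_symm_apply]

end Uniqueness

lemma hds_iff {σ : Equiv.Perm (Fin n)} :
    HasDecreasingSubseq σ 3 ↔ ¬ NoDesc3 ⇑σ := by
  constructor
  · rintro ⟨s, hs, hd⟩ hno
    exact hno (s 0) (s 1) (s 2) (hs (by decide)) (hs (by decide))
      (hd 0 1 (by decide)) (hd 1 2 (by decide))
  · intro hno
    rw [NoDesc3] at hno
    push_neg at hno
    obtain ⟨a, b, c, hab, hbc, h1, h2⟩ := hno
    refine ⟨![a, b, c], ?_, ?_⟩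
    · intro u v huv
      fin_cases u <;> fin_cases v <;>
        simp_all [Matrix.cons_val_zero, Matrix.cons_val_one] <;>
        first
          | exact hab
          | exact hbc
          | exact lt_trans hab hbc
          | exact absurd huv (by decide)
    · intro u v huv
      fin_cases u <;> fin_cases v <;>
        simp_all [Matrix.cons_val_zero, Matrix.cons_val_one] <;>
        first
          | exact h1
          | exact h2
          | exact lt_trans h2 h1
          | exact absurd huv (by decide)

noncomputable def phi (n : ℕ) : {σ : Equiv.Perm (Fin n) // ¬ HasDecreasingSubseq σ 3} → SupT n :=
  fun σ => ⟨runmax ⇑σ.1, runmax_mono _, runmax_superdiag σ.1.injective⟩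

lemma phi_bijective (n : ℕ) : Function.Bijective (phi n) := by
  constructor
  · rintro ⟨σ, hσ⟩ ⟨τ, hτ⟩ h
    have hval : runmax ⇑σ = runmax ⇑τ := congrArg Subtype.val h
    have hσ' : NoDesc3 ⇑σ := not_not.1 (fun hh => hσ (hds_iff.2 hh))
    have hτ' : NoDesc3 ⇑τ := not_not.1 (fun hh => hτ (hds_iff.2 hh))
    have h1 := psiFun_runmax_eq σ.injective hσ'
    have h2 := psiFun_runmax_eq τ.injective hτ'
    apply Subtype.ext
    apply Equiv.coe_fn_injective
    show (⇑σ : Fin n → Fin n) = ⇑τ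
    rw [← h1, ← h2, hval]
  · rintro ⟨f, hf1, hf2⟩
    have hbij : Function.Bijective (psiFun f) :=
      Finite.injective_iff_bijective.1 (psiFun_injective f)
    refine ⟨⟨Equiv.ofBijective (psiFun f) hbij, ?_⟩, ?_⟩
    · rw [hds_iff, not_not]
      exact psiFun_noDesc3 hf1 hf2
    · apply Subtype.ext
      exact runmax_psiFun hf1 hf2

lemma S_two (N : ℕ) : S 2 N = catalan N := by
  have h1 : S 2 N = A N := by
    rw [S, A]
    exact Nat.card_eq_of_bijective (phi N) (phi_bijective N)
  rw [h1, A_eq_catalan]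

end PartB

theorem stmt0 (N : ℕ) :
    S 2 N * (Nat.factorial N * Nat.factorial (N + 1)) = Nat.factorial (2 * N) := by
  rw [S_two]
  have h1 : (N + 1) * catalan N = N.centralBinom := succ_mul_catalan_eq_centralBinom N
  have h2 : N.centralBinom = (2 * N).choose N := rfl
  have h3 : (2 * N).choose N * Nat.factorial N * Nat.factorial (2 * N - N) =
      Nat.factorial (2 * N) := Nat.choose_mul_factorial_mul_factorial (by omega)
  have h4 : 2 * N - N = N := by omega
  rw [h4] at h3
  calc catalan N * (Nat.factorial N * Nat.factorial (N + 1))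
      = ((N + 1) * catalan N) * Nat.factorial N * Nat.factorial N := by
        rw [Nat.factorial_succ]; ring
    _ = Nat.factorial (2 * N) := by rw [h1, h2, h3]
end

section
/- The Mehta integral at β = 2 satisfies Ψ(d;2) = ∫_{ℝ^d} exp(-∑_{i=1}^d x_i²) · ∏_{1≤i<j≤d} (x_i - x_j)² dx = (2π)^{d/2} · 2^{-d²/2} · ∏_{i=1}^{d+1} Γ(i). -/
open Finset

section MehtaAux
open MeasureTheory Real Polynomial



lemma intg_pow_gauss (n : ℕ) : Integrable (fun t : ℝ => t ^ n * Real.exp (-t^2)) := by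
  have h := integrable_rpow_mul_exp_neg_mul_sq (b := 1) one_pos (s := n)
    (lt_of_lt_of_le neg_one_lt_zero (Nat.cast_nonneg n))
  simpa [Real.rpow_natCast] using h

noncomputable def gmom (k : ℕ) : ℝ := ∫ t : ℝ, t ^ k * Real.exp (-t^2)

lemma gmom_zero : gmom 0 = Real.sqrt π := by
  have := integral_gaussian (1 : ℝ)
  simpa [gmom] using this

lemma gmom_one : gmom 1 = 0 := by
  have h := integral_neg_eq_self (fun t : ℝ => t ^ 1 * Real.exp (-t^2)) volume
  simp only [pow_one, neg_neg, neg_sq] at h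
  rw [show (fun x : ℝ => -x * Real.exp (-x^2)) = fun x : ℝ => -(x * Real.exp (-x^2)) from
    by funext x; ring] at h
  rw [integral_neg] at h
  have h1 : gmom 1 = ∫ x : ℝ, x * Real.exp (-x^2) := by
    simp only [gmom, pow_one]
  rw [h1]; linarith

lemma gmom_rec (k : ℕ) : gmom (k+2) = ((k+1 : ℝ)/2) * gmom k := by
  have hu : ∀ x : ℝ, HasDerivAt (fun t : ℝ => t^(k+1)) (((k:ℝ)+1) * x^k) x := by
    intro x
    simpa using (hasDerivAt_pow (k+1) x)
  have hv : ∀ x : ℝ, HasDerivAt (fun t : ℝ => -(1/2) * Real.exp (-t^2)) (x * Real.exp (-x^2)) x := by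
    intro x
    have h1 : HasDerivAt (fun t : ℝ => -t^2) (-(2*x)) x := by
      simpa using ((hasDerivAt_pow 2 x).fun_neg)
    have h2 := (h1.exp).const_mul (-(1/2) : ℝ)
    rw [show x * Real.exp (-x^2) = -(1/2) * (Real.exp (-x^2) * -(2*x)) by ring]
    exact h2
  have huv' : Integrable ((fun t : ℝ => t^(k+1)) * fun x => x * Real.exp (-x^2)) := by
    have := intg_pow_gauss (k+2)
    apply this.congr
    filter_upwards with x; simp [Pi.mul_apply]; ring
  have hu'v : Integrable ((fun x : ℝ => ((k:ℝ)+1) * x^k) * fun t => -(1/2) * Real.exp (-t^2)) := by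
    have := ((intg_pow_gauss k).const_mul (((k:ℝ)+1) * (-(1/2))))
    apply this.congr
    filter_upwards with x; simp [Pi.mul_apply]; ring
  have huv : Integrable ((fun t : ℝ => t^(k+1)) * fun t => -(1/2) * Real.exp (-t^2)) := by
    have := ((intg_pow_gauss (k+1)).const_mul (-(1/2) : ℝ))
    apply this.congr
    filter_upwards with x; simp [Pi.mul_apply]; ring
  have := integral_mul_deriv_eq_deriv_mul_of_integrable (fun x _ => hu x) (fun x _ => hv x) huv' hu'v huv
  have hL : (∫ x : ℝ, x^(k+1) * (x * Real.exp (-x^2))) = gmom (k+2) := by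
    simp only [gmom]; congr 1; funext x; ring
  have hR : (∫ x : ℝ, ((k:ℝ)+1) * x^k * (-(1/2) * Real.exp (-x^2)))
      = -(((k:ℝ)+1)/2) * gmom k := by
    rw [show -(((k:ℝ)+1)/2) * gmom k = ∫ x : ℝ, (((k:ℝ)+1) * (-(1/2))) * (x^k * Real.exp (-x^2))
      from by
      rw [integral_const_mul, show (∫ x : ℝ, x^k * Real.exp (-x^2)) = gmom k from rfl]; ring]
    congr 1; funext x; ring
  rw [hL, hR] at this
  rw [this]; ring


noncomputable def Jf (k n : ℕ) : ℝ :=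
  if n ≤ k ∧ (k - n) % 2 = 0 then Real.sqrt π * k.factorial / ((k-n)/2).factorial / 2^k else 0

lemma Jf_of_not {k n : ℕ} (h : ¬(n ≤ k ∧ (k - n) % 2 = 0)) : Jf k n = 0 := if_neg h

lemma Jf_of {k n m : ℕ} (h : k = n + 2*m) :
    Jf k n = Real.sqrt π * k.factorial / m.factorial / 2^k := by
  rw [Jf, if_pos (by omega), show (k-n)/2 = m from by omega]

lemma Jf_rec (k n : ℕ) : Jf k (n+2) = Jf (k+1) (n+1) - ((n+1:ℝ)/2) * Jf k n := by
  rcases Nat.lt_or_ge k (n+2) with hk | hk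
  · rcases Nat.lt_or_ge k n with h1 | h1
    · rw [Jf_of_not (by omega), Jf_of_not (by omega), Jf_of_not (by omega)]; ring
    · have : k = n ∨ k = n + 1 := by omega
      rcases this with rfl | rfl
      · rw [Jf_of_not (by omega), Jf_of (m := 0) (by omega), Jf_of (m := 0) (by omega)]
        rw [show k + 1 = k.succ from rfl, Nat.factorial_succ]
        push_cast
        rw [pow_succ]
        field_simp
        ring
      · rw [Jf_of_not (by omega), Jf_of_not (by omega), Jf_of_not (by omega)]; ring
  · rcases Nat.even_or_odd (k - n) with ⟨m, hm⟩ | ⟨m, hm⟩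
    · obtain ⟨a, rfl⟩ : ∃ a, m = a + 1 := ⟨m - 1, by omega⟩
      have hk2 : k = n + 2*a + 2 := by omega
      subst hk2
      rw [Jf_of (m := a) (by omega : n + 2*a + 2 = (n+2) + 2*a),
          Jf_of (m := a+1) (by omega : n + 2*a + 2 + 1 = (n+1) + 2*(a+1)),
          Jf_of (m := a+1) (by omega : n + 2*a + 2 = n + 2*(a+1))]
      have e1 : (n + 2*a + 2 + 1).factorial = (n + 2*a + 2 + 1) * (n + 2*a + 2).factorial :=
        Nat.factorial_succ _
      have e2 : (a+1).factorial = (a+1) * a.factorial := Nat.factorial_succ _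
      rw [e1, e2]
      push_cast
      rw [pow_succ]
      have h1 : (0:ℝ) < (a.factorial : ℝ) := by positivity
      have h2 : (0:ℝ) < ((n + 2*a + 2).factorial : ℝ) := by positivity
      field_simp
      ring
    · rw [Jf_of_not (by omega), Jf_of_not (by omega), Jf_of_not (by omega)]; ring

lemma intg_poly_gauss (P : Polynomial ℝ) :
    Integrable (fun t : ℝ => P.eval t * Real.exp (-t^2)) := by
  have : (fun t : ℝ => P.eval t * Real.exp (-t^2)) =
      fun t => ∑ k ∈ Finset.range (P.natDegree + 1), P.coeff k * (t ^ k * Real.exp (-t^2)) := by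
    funext t
    rw [Polynomial.eval_eq_sum_range, Finset.sum_mul]
    simp [mul_assoc]
  rw [this]
  exact integrable_finset_sum _ fun k _ => (intg_pow_gauss k).const_mul _

lemma intg_pow_poly_gauss (k : ℕ) (P : Polynomial ℝ) :
    Integrable (fun t : ℝ => t ^ k * (P.eval t * Real.exp (-t^2))) := by
  have := intg_poly_gauss (Polynomial.X ^ k * P)
  apply this.congr
  filter_upwards with t
  simp [mul_assoc]

noncomputable def hp : ℕ → Polynomial ℝ
  | 0 => 1
  | 1 => Polynomial.X
  | (n+2) => Polynomial.X * hp (n+1) - Polynomial.C ((n+1 : ℝ)/2) * hp n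

lemma hp_monic : ∀ n, (hp n).Monic ∧ (hp n).natDegree = n
  | 0 => ⟨monic_one, natDegree_one⟩
  | 1 => ⟨monic_X, natDegree_X⟩
  | (n+2) => by
    obtain ⟨h1, h2⟩ := hp_monic (n+1)
    obtain ⟨h3, h4⟩ := hp_monic n
    have hm : (Polynomial.X * hp (n+1)).Monic := monic_X.mul h1
    have hd : (Polynomial.X * hp (n+1)).natDegree = n + 2 := by
      rw [natDegree_mul X_ne_zero h1.ne_zero, natDegree_X, h2]; omega
    have hlt : (Polynomial.C ((n+1 : ℝ)/2) * hp n).degree < (Polynomial.X * hp (n+1)).degree := by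
      apply lt_of_le_of_lt (degree_mul_le _ _)
      rw [Polynomial.degree_eq_natDegree hm.ne_zero, hd]
      apply lt_of_le_of_lt (add_le_add degree_C_le degree_le_natDegree)
      rw [h4]
      norm_cast
      omega
    refine ⟨hm.sub_of_left hlt, ?_⟩
    rw [hp, ← hd]
    apply natDegree_sub_eq_left_of_natDegree_lt
    rw [hd]
    apply lt_of_le_of_lt (natDegree_mul_le)
    simp only [natDegree_C, zero_add, h4]
    omega

lemma Jf_rec0 (k : ℕ) : Jf (k+2) 0 = ((k+1 : ℝ)/2) * Jf k 0 := by
  rcases Nat.even_or_odd k with ⟨m, rfl⟩ | hk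
  · rw [Jf_of (m := m+1) (show m+m+2 = 0 + 2*(m+1) from by omega),
        Jf_of (m := m) (show m+m = 0 + 2*m from by omega)]
    have e1 : (m + m + 2).factorial = (m+m+2) * ((m+m+1) * (m+m).factorial) := by
      rw [show m+m+2 = (m+m+1)+1 from rfl, Nat.factorial_succ, Nat.factorial_succ]
    have e2 : (m+1).factorial = (m+1) * m.factorial := Nat.factorial_succ m
    rw [e1, e2, pow_add]
    push_cast
    have h1 : (0:ℝ) < (m.factorial : ℝ) := by positivity
    have h2 : (0:ℝ) < ((m+m).factorial : ℝ) := by positivity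
    field_simp
    ring
  · obtain ⟨m, rfl⟩ := hk
    rw [Jf_of_not (by omega), Jf_of_not (by omega)]; ring

lemma gmom_eq : ∀ k, gmom k = Jf k 0
  | 0 => by rw [gmom_zero, Jf_of (m := 0) (by omega)]; simp
  | 1 => by rw [gmom_one, Jf_of_not (by omega)]
  | (k+2) => by rw [gmom_rec, gmom_eq k, Jf_rec0]

lemma Jf_zero_one (k : ℕ) : Jf (k+1) 0 = Jf k 1 := by
  rcases Nat.even_or_odd k with ⟨m, rfl⟩ | hk
  · rw [Jf_of_not (by omega), Jf_of_not (by omega)]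
  · obtain ⟨a, rfl⟩ := hk
    rw [Jf_of (m := a+1) (by omega), Jf_of (m := a) (by omega)]
    have e1 : (2*a+1+1).factorial = (2*a+2) * (2*a+1).factorial := by
      rw [show 2*a+1+1 = (2*a+1)+1 from rfl, Nat.factorial_succ]
    have e2 : (a+1).factorial = (a+1) * a.factorial := Nat.factorial_succ a
    rw [e1, e2, pow_succ]
    push_cast
    have h1 : (0:ℝ) < (a.factorial : ℝ) := by positivity
    have h2 : (0:ℝ) < ((2*a+1).factorial : ℝ) := by positivity
    field_simp

lemma hp_int : ∀ n k, (∫ t : ℝ, t ^ k * ((hp n).eval t * Real.exp (-t^2))) = Jf k n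
  | 0, k => by
    simp only [hp, eval_one, one_mul]
    rw [show Jf k 0 = gmom k from (gmom_eq k).symm]
    rfl
  | 1, k => by
    simp only [hp, eval_X]
    have : (∫ t : ℝ, t ^ k * (t * Real.exp (-t^2))) = gmom (k+1) := by
      simp only [gmom]; congr 1; funext t; ring
    rw [this, gmom_eq, Jf_zero_one]
  | (n+2), k => by
    have e1 := hp_int (n+1) (k+1)
    have e2 := hp_int n k
    have hsplit : (fun t : ℝ => t ^ k * ((hp (n+2)).eval t * Real.exp (-t^2)))
        = fun t : ℝ => t ^ (k+1) * ((hp (n+1)).eval t * Real.exp (-t^2))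
          - ((n+1 : ℝ)/2) * (t ^ k * ((hp n).eval t * Real.exp (-t^2))) := by
      funext t
      simp only [hp, eval_sub, eval_mul, eval_X, eval_C]
      ring
    rw [hsplit, integral_sub (intg_pow_poly_gauss (k+1) (hp (n+1)))
      (((intg_pow_poly_gauss k (hp n)).const_mul _)), e1, integral_const_mul, e2, Jf_rec]

noncomputable def hnorm (n : ℕ) : ℝ := Real.sqrt π * n.factorial / 2^n

lemma hp_orth_le {m n : ℕ} (h : m ≤ n) :
    (∫ t : ℝ, (hp m).eval t * ((hp n).eval t * Real.exp (-t^2)))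
      = if m = n then hnorm n else 0 := by
  have hdeg : (hp m).natDegree < m + 1 := by rw [(hp_monic m).2]; omega
  have heq : (fun t : ℝ => (hp m).eval t * ((hp n).eval t * Real.exp (-t^2)))
      = fun t : ℝ => ∑ k ∈ Finset.range (m+1),
          (hp m).coeff k * (t ^ k * ((hp n).eval t * Real.exp (-t^2))) := by
    funext t
    rw [Polynomial.eval_eq_sum_range' hdeg, Finset.sum_mul]
    exact Finset.sum_congr rfl fun k _ => by ring
  rw [heq, integral_finset_sum _
    (fun k _ => (intg_pow_poly_gauss k (hp n)).const_mul _)]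
  have hterm : ∀ k ∈ Finset.range (m+1),
      (∫ t : ℝ, (hp m).coeff k * (t ^ k * ((hp n).eval t * Real.exp (-t^2))))
        = (hp m).coeff k * Jf k n := by
    intro k _
    rw [integral_const_mul, hp_int]
  rw [Finset.sum_congr rfl hterm]
  rcases eq_or_lt_of_le h with rfl | hlt
  · rw [if_pos rfl]
    rw [Finset.sum_range_succ]
    have h0 : ∀ k ∈ Finset.range m, (hp m).coeff k * Jf k m = 0 := by
      intro k hk
      rw [Jf_of_not (by simp at hk; omega), mul_zero]
    rw [Finset.sum_congr rfl h0, Finset.sum_const, smul_zero, zero_add]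
    have hc : (hp m).coeff m = 1 := by
      have h1 := ((hp_monic m).1).coeff_natDegree
      rwa [(hp_monic m).2] at h1
    rw [hc, one_mul, Jf_of (m := 0) (by omega)]
    simp [hnorm]
  · rw [if_neg hlt.ne]
    apply Finset.sum_eq_zero
    intro k hk
    rw [Jf_of_not (by simp at hk; omega), mul_zero]

lemma hp_orth (m n : ℕ) :
    (∫ t : ℝ, (hp m).eval t * ((hp n).eval t * Real.exp (-t^2)))
      = if m = n then hnorm n else 0 := by
  rcases le_total m n with h | h
  · exact hp_orth_le h
  · have := hp_orth_le h
    have hc : (fun t : ℝ => (hp n).eval t * ((hp m).eval t * Real.exp (-t^2)))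
        = fun t : ℝ => (hp m).eval t * ((hp n).eval t * Real.exp (-t^2)) := by
      funext t; ring
    rw [hc] at this
    rw [this]
    rcases eq_or_ne m n with rfl | hne
    · simp
    · rw [if_neg (fun h' => hne h'.symm), if_neg hne]

lemma intg_hp_pair (a b : ℕ) :
    Integrable (fun t : ℝ => (hp a).eval t * ((hp b).eval t * Real.exp (-t^2))) := by
  apply (intg_poly_gauss (hp a * hp b)).congr
  filter_upwards with t
  simp [mul_assoc]

lemma prod_pairs {d : ℕ} {M : Type*} [CommMonoid M] (f : Fin d × Fin d → M) :
    ∏ p ∈ Finset.univ.filter (fun p : Fin d × Fin d => p.1 < p.2), f p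
      = ∏ i : Fin d, ∏ j ∈ Finset.Ioi i, f (i, j) := by
  rw [Finset.prod_filter, ← Finset.univ_product_univ, Finset.prod_product]
  refine Finset.prod_congr rfl fun i _ => ?_
  rw [← Finset.prod_filter, Finset.filter_lt_eq_Ioi]

lemma pointwise_key {d : ℕ} (x : Fin d → ℝ) :
    Real.exp (-∑ i, x i ^ 2) *
      ∏ p ∈ Finset.univ.filter (fun p : Fin d × Fin d => p.1 < p.2), (x p.1 - x p.2) ^ 2
    = ∑ σ : Equiv.Perm (Fin d), ∑ τ : Equiv.Perm (Fin d),
        (((Equiv.Perm.sign σ : ℤ) : ℝ) * ((Equiv.Perm.sign τ : ℤ) : ℝ)) *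
          ∏ i : Fin d, ((hp ((σ⁻¹ i : Fin d) : ℕ)).eval (x i) *
            ((hp ((τ⁻¹ i : Fin d) : ℕ)).eval (x i) * Real.exp (-(x i)^2))) := by
  have hdet : (Matrix.vandermonde x).det
      = (Matrix.of (fun i j : Fin d => ((hp (j : ℕ)).eval (x i)))).det :=
    Matrix.det_eval_matrixOfPolynomials_eq_det_vandermonde x (fun j => hp (j : ℕ))
      (fun j => (hp_monic (j : ℕ)).2) (fun j => (hp_monic (j : ℕ)).1)
  set N := Matrix.of (fun i j : Fin d => ((hp (j : ℕ)).eval (x i))) with hN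
  have hprod : (∏ p ∈ Finset.univ.filter (fun p : Fin d × Fin d => p.1 < p.2),
      (x p.1 - x p.2) ^ 2) = N.det ^ 2 := by
    rw [← hdet, Matrix.det_vandermonde, prod_pairs]
    rw [← Finset.prod_pow]
    refine Finset.prod_congr rfl fun i _ => ?_
    rw [← Finset.prod_pow]
    exact Finset.prod_congr rfl fun j _ => by ring
  have hdetexp : N.det = ∑ σ : Equiv.Perm (Fin d),
      (((Equiv.Perm.sign σ : ℤ) : ℝ)) * ∏ i : Fin d, (hp ((σ⁻¹ i : Fin d) : ℕ)).eval (x i) := by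
    rw [Matrix.det_apply']
    refine Finset.sum_congr rfl fun σ _ => ?_
    congr 1
    have := Equiv.prod_comp σ (fun i => (hp ((σ⁻¹ i : Fin d) : ℕ)).eval (x i))
    simp only [show ∀ j, σ⁻¹ (σ j) = j from fun j => σ.symm_apply_apply j] at this
    rw [← this]
    exact Finset.prod_congr rfl fun i _ => rfl
  have hexp : Real.exp (-∑ i, x i ^ 2) = ∏ i : Fin d, Real.exp (-(x i)^2) := by
    rw [← Real.exp_sum]
    congr 1
    rw [← Finset.sum_neg_distrib]
  rw [hprod, hdetexp, sq, Finset.sum_mul_sum, hexp]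
  rw [Finset.mul_sum]
  refine Finset.sum_congr rfl fun σ _ => ?_
  rw [Finset.mul_sum]
  refine Finset.sum_congr rfl fun τ _ => ?_
  have hsplit : ∏ i : Fin d, ((hp ((σ⁻¹ i : Fin d) : ℕ)).eval (x i) *
      ((hp ((τ⁻¹ i : Fin d) : ℕ)).eval (x i) * Real.exp (-(x i)^2)))
      = (∏ i : Fin d, (hp ((σ⁻¹ i : Fin d) : ℕ)).eval (x i)) *
        ((∏ i : Fin d, (hp ((τ⁻¹ i : Fin d) : ℕ)).eval (x i)) *
          ∏ i : Fin d, Real.exp (-(x i)^2)) := by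
    rw [Finset.prod_mul_distrib, Finset.prod_mul_distrib]
  rw [hsplit]
  ring

lemma integral_key (d : ℕ) :
    (∫ x : Fin d → ℝ, Real.exp (-∑ i, x i ^ 2) *
      ∏ p ∈ Finset.univ.filter (fun p : Fin d × Fin d => p.1 < p.2), (x p.1 - x p.2) ^ 2)
    = (d.factorial : ℝ) * ∏ k ∈ Finset.range d, hnorm k := by
  have hrw : (fun x : Fin d → ℝ => Real.exp (-∑ i, x i ^ 2) *
      ∏ p ∈ Finset.univ.filter (fun p : Fin d × Fin d => p.1 < p.2), (x p.1 - x p.2) ^ 2)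
      = fun x => ∑ σ : Equiv.Perm (Fin d), ∑ τ : Equiv.Perm (Fin d),
        (((Equiv.Perm.sign σ : ℤ) : ℝ) * ((Equiv.Perm.sign τ : ℤ) : ℝ)) *
          ∏ i : Fin d, ((hp ((σ⁻¹ i : Fin d) : ℕ)).eval (x i) *
            ((hp ((τ⁻¹ i : Fin d) : ℕ)).eval (x i) * Real.exp (-(x i)^2))) :=
    funext fun x => pointwise_key x
  have hint : ∀ σ τ : Equiv.Perm (Fin d), Integrable (fun x : Fin d → ℝ =>
      (((Equiv.Perm.sign σ : ℤ) : ℝ) * ((Equiv.Perm.sign τ : ℤ) : ℝ)) *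
        ∏ i : Fin d, ((hp ((σ⁻¹ i : Fin d) : ℕ)).eval (x i) *
          ((hp ((τ⁻¹ i : Fin d) : ℕ)).eval (x i) * Real.exp (-(x i)^2)))) := by
    intro σ τ
    exact (Integrable.fintype_prod
      (f := fun (i : Fin d) (t : ℝ) => (hp ((σ⁻¹ i : Fin d) : ℕ)).eval t *
        ((hp ((τ⁻¹ i : Fin d) : ℕ)).eval t * Real.exp (-t^2)))
      (fun i => intg_hp_pair _ _)).const_mul _
  rw [hrw, integral_finset_sum _ (fun σ _ => integrable_finset_sum _ (fun τ _ => hint σ τ))]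
  have hterm : ∀ σ : Equiv.Perm (Fin d),
      (∫ x : Fin d → ℝ, ∑ τ : Equiv.Perm (Fin d),
        (((Equiv.Perm.sign σ : ℤ) : ℝ) * ((Equiv.Perm.sign τ : ℤ) : ℝ)) *
          ∏ i : Fin d, ((hp ((σ⁻¹ i : Fin d) : ℕ)).eval (x i) *
            ((hp ((τ⁻¹ i : Fin d) : ℕ)).eval (x i) * Real.exp (-(x i)^2))))
      = ∏ k ∈ Finset.range d, hnorm k := by
    intro σ
    rw [integral_finset_sum _ (fun τ _ => hint σ τ)]
    have h1 : ∀ τ : Equiv.Perm (Fin d),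
        (∫ x : Fin d → ℝ,
          (((Equiv.Perm.sign σ : ℤ) : ℝ) * ((Equiv.Perm.sign τ : ℤ) : ℝ)) *
          ∏ i : Fin d, ((hp ((σ⁻¹ i : Fin d) : ℕ)).eval (x i) *
            ((hp ((τ⁻¹ i : Fin d) : ℕ)).eval (x i) * Real.exp (-(x i)^2))))
        = (((Equiv.Perm.sign σ : ℤ) : ℝ) * ((Equiv.Perm.sign τ : ℤ) : ℝ)) *
            (if σ = τ then ∏ k ∈ Finset.range d, hnorm k else 0) := by
      intro τ
      rw [integral_const_mul]
      congr 1
      rw [MeasureTheory.integral_fintype_prod_volume_eq_prod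
        (f := fun (i : Fin d) (t : ℝ) => (hp ((σ⁻¹ i : Fin d) : ℕ)).eval t *
          ((hp ((τ⁻¹ i : Fin d) : ℕ)).eval t * Real.exp (-t^2)))]
      have h2 : ∀ i : Fin d, (∫ t : ℝ, (hp ((σ⁻¹ i : Fin d) : ℕ)).eval t *
          ((hp ((τ⁻¹ i : Fin d) : ℕ)).eval t * Real.exp (-t^2)))
          = if ((σ⁻¹ i : Fin d) : ℕ) = ((τ⁻¹ i : Fin d) : ℕ) then hnorm ((τ⁻¹ i : Fin d) : ℕ)
            else 0 := fun i => hp_orth _ _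
    
      rw [Finset.prod_congr rfl (fun i _ => h2 i)]
      by_cases hστ : σ = τ
      · subst hστ
        rw [if_pos rfl]
        rw [Finset.prod_congr rfl (fun i _ => if_pos rfl)]
        have := Equiv.prod_comp (σ⁻¹ : Equiv.Perm (Fin d)) (fun j : Fin d => hnorm (j : ℕ))
        rw [this]
        exact Fin.prod_univ_eq_prod_range (fun k => hnorm k) d
      · rw [if_neg hστ]
        have : ∃ i : Fin d, σ⁻¹ i ≠ τ⁻¹ i := by
          by_contra hall
          push_neg at hall
          apply hστ
          have : σ⁻¹ = τ⁻¹ := Equiv.ext hall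
          rw [← inv_inv σ, this, inv_inv]
        obtain ⟨i, hi⟩ := this
        refine Finset.prod_eq_zero (Finset.mem_univ i) ?_
        rw [if_neg (fun h => hi (Fin.val_injective h))]
    rw [Finset.sum_congr rfl (fun τ _ => h1 τ)]
    rw [Finset.sum_eq_single σ]
    · rw [if_pos rfl]
      rcases Int.units_eq_one_or (Equiv.Perm.sign σ) with h | h <;> rw [h] <;> norm_num
    · intro τ _ hτ
      rw [if_neg (fun h => hτ h.symm), mul_zero]
    · intro h
      exact absurd (Finset.mem_univ σ) h
  rw [Finset.sum_congr rfl (fun σ _ => hterm σ), Finset.sum_const, Finset.card_univ]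
  rw [Fintype.card_perm, Fintype.card_fin]
  rw [nsmul_eq_mul]

lemma final_arith (d : ℕ) :
    (d.factorial : ℝ) * ∏ k ∈ Finset.range d, hnorm k
      = (2 * π) ^ ((d:ℝ)/2) * 2 ^ (-(d:ℝ)^2/2) * ∏ i ∈ Finset.range (d+1), (i.factorial : ℝ) := by
  have hT : ((∑ k ∈ Finset.range d, k : ℕ) : ℝ) = ((d:ℝ)^2 - d)/2 := by
    have h := Finset.sum_range_id_mul_two d
    rcases d with _ | e
    · simp
    · have : (e+1) * (e+1-1) = (e+1) * e := rfl
      rw [this] at h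
      have := congrArg (Nat.cast (R := ℝ)) h
      push_cast at this ⊢
      nlinarith [this]
  have hL : ∏ k ∈ Finset.range d, hnorm k
      = (Real.sqrt π)^d * (∏ k ∈ Finset.range d, (k.factorial : ℝ)) /
        2^(∑ k ∈ Finset.range d, k) := by
    rw [← Finset.prod_pow_eq_pow_sum]
    simp only [hnorm]
    rw [Finset.prod_div_distrib, Finset.prod_mul_distrib, Finset.prod_const, Finset.card_range]
  have hR2 : (2:ℝ) ^ ((d:ℝ)/2) * 2 ^ (-(d:ℝ)^2/2) = (2^(∑ k ∈ Finset.range d, k : ℕ) : ℝ)⁻¹ := by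
    rw [← Real.rpow_natCast 2 (∑ k ∈ Finset.range d, k), ← Real.rpow_neg (by norm_num),
        ← Real.rpow_add (by norm_num)]
    congr 1
    rw [hT]
    ring
  have hpi : (2 * π) ^ ((d:ℝ)/2) = (2:ℝ)^((d:ℝ)/2) * (Real.sqrt π)^d := by
    rw [Real.mul_rpow (by norm_num) pi_pos.le]
    congr 1
    rw [Real.sqrt_eq_rpow, ← Real.rpow_natCast (π ^ ((1:ℝ)/2)) d,
        ← Real.rpow_mul pi_pos.le]
    congr 1
    ring
  have hR : (2 * π) ^ ((d:ℝ)/2) * 2 ^ (-(d:ℝ)^2/2)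
      = (Real.sqrt π)^d * ((2:ℝ)^(∑ k ∈ Finset.range d, k : ℕ))⁻¹ := by
    rw [hpi, mul_comm ((2:ℝ)^((d:ℝ)/2)) _, mul_assoc, hR2]
  rw [hL, Finset.prod_range_succ, hR]
  have h2 : ((2:ℝ) ^ (∑ k ∈ Finset.range d, k : ℕ)) ≠ 0 := by positivity
  field_simp

end MehtaAux

theorem stmt17 (d : ℕ) :
    (mehta d 2 = ∫ x : Fin d → ℝ, Real.exp (-∑ i, x i ^ 2) *
      ∏ p ∈ Finset.univ.filter (fun p : Fin d × Fin d => p.1 < p.2), (x p.1 - x p.2) ^ 2) ∧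
    mehta d 2 = (2 * Real.pi) ^ ((d : ℝ) / 2) * 2 ^ (-(d : ℝ) ^ 2 / 2) *
      ∏ i ∈ Finset.range (d + 1), (Nat.factorial i : ℝ) := by
  have h1 : mehta d 2 = ∫ x : Fin d → ℝ, Real.exp (-∑ i, x i ^ 2) *
      ∏ p ∈ Finset.univ.filter (fun p : Fin d × Fin d => p.1 < p.2), (x p.1 - x p.2) ^ 2 := by
    unfold mehta
    have hfun : (fun x : Fin d → ℝ => Real.exp (-((2:ℝ)/2) * ∑ i, x i ^ 2) *
        ∏ p ∈ Finset.univ.filter (fun p : Fin d × Fin d => p.1 < p.2),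
          |x p.1 - x p.2| ^ (2:ℝ))
        = fun x : Fin d → ℝ => Real.exp (-∑ i, x i ^ 2) *
          ∏ p ∈ Finset.univ.filter (fun p : Fin d × Fin d => p.1 < p.2),
            (x p.1 - x p.2) ^ 2 := by
      funext x
      have e1 : -((2:ℝ)/2) * ∑ i, x i ^ 2 = -∑ i, x i ^ 2 := by norm_num
      rw [e1]
      congr 1
      refine Finset.prod_congr rfl fun p _ => ?_
      rw [show (2:ℝ) = ((2:ℕ):ℝ) from by norm_num, Real.rpow_natCast, sq_abs]
    rw [hfun]
  refine ⟨h1, ?_⟩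
  rw [h1, integral_key, final_arith]
end

section
/- For fixed reals y_1 > ... > y_d with ∑ y_i = 0 and any ε with 0 < ε < 1, as n → ∞: ∑_{i=1}^d (n + y_i·n^ε - 1/2)·log(1 + y_i·n^{ε-1}) is asymptotically equal to (n^{2ε-1}/2)·∑_{i=1}^d y_i² when ∑ y_i² > 0; in particular it tends to (1/2)∑ y_i² when ε = 1/2. -/
open Finset

open Real Filter

private lemma keyid (N u y e L : ℝ) (hN : N ≠ 0) (hu : u ≠ 0)
    (hL : L = y*u - (y*u)^2/2 + e) :
    ((N + y*(u*N) - 1/2) * L - y*(u*N)) * (1/(u^2*N)) =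
      y^2/2 - y/(2*(u*N)) - y^3/2*u + y^2/(4*N) + (N + y*(u*N) - 1/2)*e*(1/(u^2*N)) := by
  subst hL; field_simp; ring

private lemma log_taylor2 {t : ℝ} (h : |t| ≤ 1/2) :
    |Real.log (1+t) - t + t^2/2| ≤ 2*|t|^3 := by
  have h1 : |(-t)| < 1 := by rw [abs_neg]; linarith
  have h2 := Real.abs_log_sub_add_sum_range_le h1 2
  simp [Finset.sum_range_succ] at h2
  rw [show Real.log (1+t) - t + t^2/2 = -t + t^2/(1+1) + Real.log (1+t) by ring]
  refine h2.trans ?_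
  have h3 : (1:ℝ)/2 ≤ 1 - |t| := by linarith
  calc |t|^3 / (1 - |t|) ≤ |t|^3 / (1/2) :=
        div_le_div_of_nonneg_left (by positivity) (by norm_num) h3
    _ = 2*|t|^3 := by ring

private lemma aux_term (y ε : ℝ) (hε0 : 0 < ε) (hε1 : ε < 1) :
    Tendsto (fun n : ℕ =>
      (((n:ℝ) + y * (n:ℝ)^ε - 1/2) * Real.log (1 + y * (n:ℝ)^(ε-1)) - y * (n:ℝ)^ε)
        * (n:ℝ)^(1-2*ε)) atTop (nhds (y^2/2)) := by
  set u : ℕ → ℝ := fun n => (n:ℝ)^(ε-1) with hudef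
  set E : ℕ → ℝ := fun n =>
    ((n:ℝ) + y*(u n*(n:ℝ)) - 1/2) *
      (Real.log (1 + y*u n) - y*u n + (y*u n)^2/2) * (1/((u n)^2*(n:ℝ))) with hEdef
  -- basic limits
  have hucast : Tendsto (fun n : ℕ => (n:ℝ)) atTop atTop := tendsto_natCast_atTop_atTop
  have hu0 : Tendsto u atTop (nhds 0) := by
    have h := (tendsto_rpow_neg_atTop (by linarith : (0:ℝ) < 1-ε)).comp hucast
    refine h.congr (fun n => ?_)
    simp only [Function.comp, hudef]
    congr 1; ring
  have huN : Tendsto (fun n : ℕ => u n * (n:ℝ)) atTop atTop := by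
    have h := (tendsto_rpow_atTop hε0).comp hucast
    refine h.congr' ?_
    filter_upwards [eventually_ge_atTop 1] with n hn
    have hN : (0:ℝ) < n := by exact_mod_cast hn
    simp only [Function.comp, hudef]
    have h2 : (n:ℝ)^(ε-1) * (n:ℝ) = (n:ℝ)^(ε-1) * (n:ℝ)^(1:ℝ) := by rw [Real.rpow_one]
    rw [h2, ← Real.rpow_add hN]
    congr 1; ring
  -- E tends to 0
  have hE0 : Tendsto E atTop (nhds 0) := by
    have hb : Tendsto (fun n : ℕ => 2*|y|^3 * u n + 2*|y|^4 * (u n)^2 + |y|^3 * (u n / (n:ℝ)))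
        atTop (nhds 0) := by
      have h1 : Tendsto (fun n : ℕ => 2*|y|^3 * u n) atTop (nhds 0) := by
        simpa using hu0.const_mul (2*|y|^3)
      have h2 : Tendsto (fun n : ℕ => 2*|y|^4 * (u n)^2) atTop (nhds 0) := by
        have := (hu0.mul hu0).const_mul (2*|y|^4)
        simp only [mul_zero] at this
        exact this.congr (fun n => by ring)
      have h3 : Tendsto (fun n : ℕ => |y|^3 * (u n / (n:ℝ))) atTop (nhds 0) := by
        simpa using (hu0.div_atTop hucast).const_mul (|y|^3)
      simpa using (h1.add h2).add h3
    apply squeeze_zero_norm' _ hb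
    have habs : Tendsto (fun n : ℕ => |y * u n|) atTop (nhds 0) := by
      simpa using ((hu0.const_mul y).abs)
    filter_upwards [eventually_ge_atTop 1, habs.eventually_le_const (by norm_num : (0:ℝ) < 1/2)]
      with n hn ht
    have hN : (0:ℝ) < n := by exact_mod_cast hn
    have hup : 0 < u n := Real.rpow_pos_of_pos hN _
    have he : |Real.log (1 + y*u n) - y*u n + (y*u n)^2/2| ≤ 2*|y*u n|^3 := log_taylor2 ht
    have hM : |(n:ℝ) + y*(u n*(n:ℝ)) - 1/2| ≤ (n:ℝ) + |y| * (u n*(n:ℝ)) + 1/2 := by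
      have h5 : |y * (u n*(n:ℝ))| = |y| * (u n*(n:ℝ)) := by
        rw [abs_mul, abs_of_pos (mul_pos hup hN)]
      have h3 := neg_abs_le (y*(u n*(n:ℝ)))
      have h4 := le_abs_self (y*(u n*(n:ℝ)))
      rw [abs_le]; constructor <;> [linarith; linarith]
    have hq : (0:ℝ) < 1/((u n)^2*(n:ℝ)) := by positivity
    have hend : ((n:ℝ) + |y| * (u n*(n:ℝ)) + 1/2) * (2*|y*u n|^3) * (1/((u n)^2*(n:ℝ)))
        = 2*|y|^3 * u n + 2*|y|^4 * (u n)^2 + |y|^3 * (u n / (n:ℝ)) := by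
      rw [abs_mul, abs_of_pos hup]
      field_simp
    rw [Real.norm_eq_abs, hEdef]
    dsimp only
    rw [abs_mul, abs_mul, abs_of_pos hq, ← hend]
    gcongr
  -- decomposition and final limit
  have hGlim : Tendsto (fun n : ℕ =>
      y^2/2 - y/(2*(u n*(n:ℝ))) - y^3/2 * u n + y^2/(4*(n:ℝ)) + E n)
      atTop (nhds (y^2/2)) := by
    have t1 : Tendsto (fun n : ℕ => y/(2*(u n*(n:ℝ)))) atTop (nhds 0) :=
      Tendsto.div_atTop tendsto_const_nhds (huN.const_mul_atTop (by norm_num))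
    have t2 : Tendsto (fun n : ℕ => y^3/2 * u n) atTop (nhds 0) := by
      simpa using hu0.const_mul (y^3/2)
    have t3 : Tendsto (fun n : ℕ => y^2/(4*(n:ℝ))) atTop (nhds 0) :=
      Tendsto.div_atTop tendsto_const_nhds (hucast.const_mul_atTop (by norm_num))
    have := ((((tendsto_const_nhds (x := y^2/2) (f := atTop)).sub t1).sub t2).add t3).add hE0
    simpa using this
  refine Tendsto.congr' ?_ hGlim
  filter_upwards [eventually_ge_atTop 1] with n hn
  have hN : (0:ℝ) < n := by exact_mod_cast hn
  have hup : 0 < u n := Real.rpow_pos_of_pos hN _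
  have e1 : (n:ℝ)^ε = u n * (n:ℝ) := by
    have h2 : u n * (n:ℝ) = (n:ℝ)^(ε-1) * (n:ℝ)^(1:ℝ) := by rw [Real.rpow_one]
    rw [h2, ← Real.rpow_add hN]
    congr 1; ring
  have e2 : (n:ℝ)^(1-2*ε) = 1/((u n)^2*(n:ℝ)) := by
    have hsq : (u n)^(2:ℕ) = (n:ℝ)^((ε-1)*2) := by
      rw [hudef]
      rw [← Real.rpow_natCast ((n:ℝ)^(ε-1)) 2, ← Real.rpow_mul hN.le]
      norm_num
    have hprod : (n:ℝ)^((ε-1)*2+1) = (n:ℝ)^((ε-1)*2) * (n:ℝ) := by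
      rw [Real.rpow_add hN, Real.rpow_one]
    calc (n:ℝ)^(1-2*ε) = (n:ℝ)^(-((ε-1)*2+1)) := by congr 1; ring
      _ = ((n:ℝ)^((ε-1)*2+1))⁻¹ := Real.rpow_neg hN.le _
      _ = 1/((u n)^2*(n:ℝ)) := by rw [hprod, hsq, one_div]
  have e0 : (n:ℝ)^(ε-1) = u n := rfl
  rw [e0, e1, e2, hEdef]
  dsimp only
  exact Eq.symm <| keyid (n:ℝ) (u n) y
    (Real.log (1 + y*u n) - y*u n + (y*u n)^2/2) (Real.log (1 + y*u n))
    hN.ne' hup.ne' (by ring)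

open Real Filter in
theorem stmt19' (d : ℕ) (y : Fin d → ℝ)
    (hsum : ∑ i, y i = 0) (hpos : 0 < ∑ i, y i ^ 2) (ε : ℝ) (hε0 : 0 < ε) (hε1 : ε < 1) :
    Tendsto (fun n : ℕ =>
        (∑ i, ((n : ℝ) + y i * (n : ℝ) ^ ε - 1 / 2) * Real.log (1 + y i * (n : ℝ) ^ (ε - 1))) /
        ((n : ℝ) ^ (2 * ε - 1) / 2 * ∑ i, y i ^ 2)) atTop (nhds 1) ∧
    (ε = 1 / 2 → Tendsto (fun n : ℕ =>
        ∑ i, ((n : ℝ) + y i * (n : ℝ) ^ ε - 1 / 2) * Real.log (1 + y i * (n : ℝ) ^ (ε - 1)))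
      atTop (nhds ((1 / 2) * ∑ i, y i ^ 2))) := by
  set F : ℕ → ℝ := fun n =>
    ∑ i, ((n : ℝ) + y i * (n : ℝ) ^ ε - 1 / 2) * Real.log (1 + y i * (n : ℝ) ^ (ε - 1)) with hF
  have hS : (∑ i, y i ^ 2) ≠ 0 := ne_of_gt hpos
  -- Step A
  have hA : Tendsto (fun n : ℕ => F n * (n:ℝ)^(1-2*ε)) atTop
      (nhds ((1/2) * ∑ i, y i ^ 2)) := by
    have hkey : ∀ n : ℕ, F n * (n:ℝ)^(1-2*ε) =
        ∑ i, ((((n:ℝ) + y i * (n:ℝ)^ε - 1/2) * Real.log (1 + y i * (n:ℝ)^(ε-1))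
          - y i * (n:ℝ)^ε) * (n:ℝ)^(1-2*ε)) := by
      intro n
      rw [hF]
      rw [← Finset.sum_mul]
      congr 1
      rw [Finset.sum_sub_distrib, ← Finset.sum_mul, hsum, zero_mul, sub_zero]
    have hlim := tendsto_finset_sum (Finset.univ : Finset (Fin d))
      (fun i _ => aux_term (y i) ε hε0 hε1)
    have hval : (∑ i, (y i)^2/2) = (1/2) * ∑ i, y i ^ 2 := by
      rw [Finset.mul_sum]; exact Finset.sum_congr rfl (fun i _ => by ring)
    rw [← hval]
    exact (Tendsto.congr (fun n => (hkey n).symm) hlim)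
  constructor
  · -- ratio tends to 1
    have h1 : Tendsto (fun n : ℕ => F n * (n:ℝ)^(1-2*ε) * (2 / ∑ i, y i ^ 2)) atTop
        (nhds (((1/2) * ∑ i, y i ^ 2) * (2 / ∑ i, y i ^ 2))) := hA.mul_const _
    have hval : ((1/2) * ∑ i, y i ^ 2) * (2 / ∑ i, y i ^ 2) = 1 := by
      field_simp
    rw [hval] at h1
    refine Tendsto.congr' ?_ h1
    filter_upwards [eventually_ge_atTop 1] with n hn
    have hN : (0:ℝ) < n := by exact_mod_cast hn
    have hp : (n:ℝ)^(2*ε-1) * (n:ℝ)^(1-2*ε) = 1 := by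
      rw [← Real.rpow_add hN]; norm_num
    have hq : (n:ℝ)^(2*ε-1) ≠ 0 := ne_of_gt (Real.rpow_pos_of_pos hN _)
    have hp' : (n:ℝ)^(1-2*ε) = ((n:ℝ)^(2*ε-1))⁻¹ := by
      field_simp
      linarith [hp]
    have hkey2 : ((n:ℝ)^(2*ε-1))⁻¹ * (2 / ∑ i, y i ^ 2)
        = ((n:ℝ)^(2*ε-1)/2 * ∑ i, y i ^ 2)⁻¹ := by
      rw [mul_inv, div_eq_mul_inv ((n:ℝ)^(2*ε-1)) 2, mul_inv, inv_inv,
        div_eq_mul_inv (2:ℝ)]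
      ring
    rw [hp', mul_assoc, hkey2, ← div_eq_mul_inv]
  · intro hhalf
    subst hhalf
    have hz : (1 - 2*(1/2:ℝ)) = 0 := by norm_num
    rw [hz] at hA
    simpa [Real.rpow_zero] using hA

open Real Filter in
theorem stmt19 (d : ℕ) (y : Fin d → ℝ) (hy : ∀ i j : Fin d, i < j → y j < y i)
    (hsum : ∑ i, y i = 0) (hpos : 0 < ∑ i, y i ^ 2) (ε : ℝ) (hε0 : 0 < ε) (hε1 : ε < 1) :
    Tendsto (fun n : ℕ =>
        (∑ i, ((n : ℝ) + y i * (n : ℝ) ^ ε - 1 / 2) * Real.log (1 + y i * (n : ℝ) ^ (ε - 1))) /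
        ((n : ℝ) ^ (2 * ε - 1) / 2 * ∑ i, y i ^ 2)) atTop (nhds 1) ∧
    (ε = 1 / 2 → Tendsto (fun n : ℕ =>
        ∑ i, ((n : ℝ) + y i * (n : ℝ) ^ ε - 1 / 2) * Real.log (1 + y i * (n : ℝ) ^ (ε - 1)))
      atTop (nhds ((1 / 2) * ∑ i, y i ^ 2))) := by
  exact stmt19' d y hsum hpos ε hε0 hε1
end
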